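/- (Blocks Lemma) Let G be a group and let g = (b_1,…,b_u) ∈ G^r be a concatenation of nonempty blocks b_i ∈ G^{r_i} such that the product of the entries of b_i equals 1 for every index i except possibly one index i_0. Then: (a) for every permutation π of {1,…,u}, the tuple g is braid equivalent to (b_{π(1)},…,b_{π(u)}); and (b) for every i, every τ in the subgroup generated by the entries of b_i, and every index j different from i_0, the tuple g is braid equivalent to the tuple obtained from g by conjugating every entry of the block b_j by τ and leaving all other blocks unchanged. -/

import Mathlib

/-- Elementary braid move: replace adjacent entries `(a, b)` by `(a * b * a⁻¹, a)`. -/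
def BraidMove {G : Type*} [Group G] (x y : List G) : Prop :=
  ∃ (l₁ l₂ : List G) (a b : G),
    x = l₁ ++ a :: b :: l₂ ∧ y = l₁ ++ (a * b * a⁻¹) :: a :: l₂

/-- Braid equivalence: the equivalence relation generated by elementary braid moves. -/
def BraidEquiv {G : Type*} [Group G] : List G → List G → Prop :=
  Relation.EqvGen BraidMove

namespace BlocksAux

variable {G : Type*} [Group G]

/-- Conjugation by `g`. -/
def cj (g : G) : G → G := fun x => g * x * g⁻¹

theorem cj_apply (g x : G) : cj g x = g * x * g⁻¹ := rfl

theorem be_refl (x : List G) : BraidEquiv x x := Relation.EqvGen.refl x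

theorem be_symm {x y : List G} (h : BraidEquiv x y) : BraidEquiv y x :=
  Relation.EqvGen.symm x y h

theorem be_trans {x y z : List G} (h1 : BraidEquiv x y) (h2 : BraidEquiv y z) :
    BraidEquiv x z := Relation.EqvGen.trans x y z h1 h2

theorem be_of_move {x y : List G} (h : BraidMove x y) : BraidEquiv x y :=
  Relation.EqvGen.rel x y h

theorem be_lift (f : List G → List G)
    (hf : ∀ x y, BraidMove x y → BraidMove (f x) (f y)) {x y : List G}
    (h : BraidEquiv x y) : BraidEquiv (f x) (f y) := by
  induction h with
  | rel a b hab => exact be_of_move (hf a b hab)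
  | refl a => exact be_refl _
  | symm a b _ ih => exact be_symm ih
  | trans a b c _ _ ih1 ih2 => exact be_trans ih1 ih2

theorem be_append_left (l : List G) {x y : List G} (h : BraidEquiv x y) :
    BraidEquiv (l ++ x) (l ++ y) := by
  refine be_lift (l ++ ·) (fun x y hxy => ?_) h
  obtain ⟨l₁, l₂, a, b, h1, h2⟩ := hxy
  exact ⟨l ++ l₁, l₂, a, b, by simp [h1], by simp [h2]⟩

theorem be_append_right (l : List G) {x y : List G} (h : BraidEquiv x y) :
    BraidEquiv (x ++ l) (y ++ l) := by
  refine be_lift (· ++ l) (fun x y hxy => ?_) h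
  obtain ⟨l₁, l₂, a, b, h1, h2⟩ := hxy
  exact ⟨l₁, l₂ ++ l, a, b, by simp [h1], by simp [h2]⟩

theorem be_map_cj (g : G) {x y : List G} (h : BraidEquiv x y) :
    BraidEquiv (x.map (cj g)) (y.map (cj g)) := by
  refine be_lift (List.map (cj g)) (fun x y hxy => ?_) h
  obtain ⟨l₁, l₂, a, b, h1, h2⟩ := hxy
  refine ⟨l₁.map (cj g), l₂.map (cj g), cj g a, cj g b, by simp [h1], ?_⟩
  have hconj : cj g (a * b * a⁻¹) = cj g a * cj g b * (cj g a)⁻¹ := by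
    simp only [cj]; group
  simp [h2, hconj]

theorem prod_map_cj (g : G) (m : List G) : (m.map (cj g)).prod = g * m.prod * g⁻¹ := by
  induction m with
  | nil => simp [cj]
  | cons a m ih => simp only [List.map_cons, List.prod_cons, ih, cj]; group

theorem map_cj_map_cj (a b : G) (m : List G) :
    (m.map (cj b)).map (cj a) = m.map (cj (a * b)) := by
  rw [List.map_map]
  apply List.map_congr_left
  intro x _
  simp only [Function.comp, cj]; group

theorem cj_comp (a b : G) : cj a ∘ cj b = cj (a * b) := by
  funext x
  simp only [Function.comp, cj]; group

theorem cj_one : (cj (1 : G)) = id := by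
  funext x
  simp [cj]

theorem map_cj_one (m : List G) : m.map (cj 1) = m := by
  rw [cj_one, List.map_id]

theorem be_single (a : G) (m : List G) : BraidEquiv (a :: m) (m.map (cj a) ++ [a]) := by
  induction m with
  | nil => exact be_refl [a]
  | cons b m ih =>
    have h1 : BraidMove (a :: b :: m) ((a * b * a⁻¹) :: a :: m) := ⟨[], m, a, b, rfl, rfl⟩
    have h2 : BraidEquiv ([a * b * a⁻¹] ++ (a :: m))
        ([a * b * a⁻¹] ++ (m.map (cj a) ++ [a])) := be_append_left _ ih
    refine be_trans (be_of_move h1) ?_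
    simpa [cj_apply] using h2

theorem be_block (l m : List G) : BraidEquiv (l ++ m) (m.map (cj l.prod) ++ l) := by
  induction l with
  | nil => simpa [map_cj_one] using be_refl m
  | cons a l ih =>
    have h1 : BraidEquiv (a :: (l ++ m)) (a :: (m.map (cj l.prod) ++ l)) :=
      be_append_left [a] ih
    have h2 : BraidEquiv ((a :: m.map (cj l.prod)) ++ l)
        (((m.map (cj l.prod)).map (cj a) ++ [a]) ++ l) :=
      be_append_right l (be_single a _)
    have h3 := be_trans h1 (by simpa using h2)
    simpa [map_cj_map_cj, cj_comp, List.append_assoc] using h3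

theorem be_comm {l : List G} (hl : l.prod = 1) (m : List G) :
    BraidEquiv (l ++ m) (m ++ l) := by
  simpa [hl, map_cj_one] using be_block l m

theorem be_conj_suffix_prod (l m : List G) (hm : m.prod = 1) :
    BraidEquiv (l ++ m) (l ++ m.map (cj l.prod)) := by
  refine be_trans (be_block l m) ?_
  have h1 : (m.map (cj l.prod)).prod = 1 := by rw [prod_map_cj, hm]; group
  exact be_comm h1 l

/-- Subgroup of elements by which one may conjugate any product-one suffix. -/
def RS (c : List G) : Subgroup G where
  carrier := {τ | ∀ m : List G, m.prod = 1 → BraidEquiv (c ++ m) (c ++ m.map (cj τ))}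
  one_mem' := fun m _ => by simpa [map_cj_one] using be_refl (c ++ m)
  mul_mem' := by
    intro a b ha hb m hm
    have h1 := hb m hm
    have h2 := ha (m.map (cj b)) (by rw [prod_map_cj, hm]; group)
    rw [map_cj_map_cj] at h2
    exact be_trans h1 h2
  inv_mem' := by
    intro a ha m hm
    have h := ha (m.map (cj a⁻¹)) (by rw [prod_map_cj, hm]; group)
    rw [map_cj_map_cj] at h
    have e : a * a⁻¹ = 1 := by group
    rw [e, map_cj_one] at h
    exact be_symm h

theorem mem_RS_of_mem {c : List G} {x : G} (hx : x ∈ c) : x ∈ RS c := by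
  obtain ⟨c₁, c₂, rfl⟩ := List.append_of_mem hx
  intro m hm
  have hm'' : (m.map (cj c₂.prod⁻¹)).prod = 1 := by rw [prod_map_cj, hm]; group
  have e1 : ((m.map (cj c₂.prod⁻¹)).map (cj c₂.prod)) = m := by
    rw [map_cj_map_cj]
    have : c₂.prod * c₂.prod⁻¹ = 1 := by group
    rw [this, map_cj_one]
  have e2 : ((m.map (cj c₂.prod⁻¹)).map (cj ((x :: c₂).prod))) = m.map (cj x) := by
    rw [map_cj_map_cj, List.prod_cons]
    congr 2
    group
  have s1 : BraidEquiv ((c₁ ++ [x]) ++ (c₂ ++ m.map (cj c₂.prod⁻¹)))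
      ((c₁ ++ [x]) ++ (c₂ ++ ((m.map (cj c₂.prod⁻¹)).map (cj c₂.prod)))) :=
    be_append_left _ (be_conj_suffix_prod c₂ _ hm'')
  have s2 : BraidEquiv (c₁ ++ ((x :: c₂) ++ m.map (cj c₂.prod⁻¹)))
      (c₁ ++ ((x :: c₂) ++ ((m.map (cj c₂.prod⁻¹)).map (cj ((x :: c₂).prod))))) :=
    be_append_left _ (be_conj_suffix_prod (x :: c₂) _ hm'')
  rw [e1] at s1
  rw [e2] at s2
  have s1' : BraidEquiv ((c₁ ++ x :: c₂) ++ m.map (cj c₂.prod⁻¹)) ((c₁ ++ x :: c₂) ++ m) := by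
    simpa [List.append_assoc] using s1
  have s2' : BraidEquiv ((c₁ ++ x :: c₂) ++ m.map (cj c₂.prod⁻¹))
      ((c₁ ++ x :: c₂) ++ m.map (cj x)) := by
    simpa [List.append_assoc] using s2
  exact be_trans (be_symm s1') s2'

theorem be_conj_suffix {c : List G} {τ : G} (hτ : τ ∈ Subgroup.closure {x | x ∈ c})
    (m : List G) (hm : m.prod = 1) : BraidEquiv (c ++ m) (c ++ m.map (cj τ)) := by
  have hle : Subgroup.closure {x | x ∈ c} ≤ RS c :=
    (Subgroup.closure_le (RS c)).mpr (fun x hx => mem_RS_of_mem hx)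
  exact hle hτ m hm

/-- Subgroup of elements by which a product-one list may be conjugated entrywise. -/
def RD (d : List G) : Subgroup G where
  carrier := {τ | BraidEquiv d (d.map (cj τ))}
  one_mem' := by simpa [map_cj_one] using be_refl d
  mul_mem' := by
    intro a b ha hb
    have h := be_map_cj a hb
    rw [map_cj_map_cj] at h
    exact be_trans ha h
  inv_mem' := by
    intro a ha
    have h := be_map_cj a⁻¹ ha
    rw [map_cj_map_cj] at h
    have e : a⁻¹ * a = 1 := by group
    rw [e, map_cj_one] at h
    exact be_symm h

theorem be_head {y : G} {rest : List G} (h : (y :: rest).prod = 1) :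
    BraidEquiv (y :: rest) ((y :: rest).map (cj y)) := by
  have hr : rest.prod = y⁻¹ := by
    rw [List.prod_cons] at h
    rw [← one_mul rest.prod, ← inv_mul_cancel y, mul_assoc, h, mul_one]
  refine be_trans (be_single y rest) ?_
  have h2 := be_block (rest.map (cj y)) [y]
  have hp : (rest.map (cj y)).prod = y⁻¹ := by rw [prod_map_cj, hr]; group
  rw [hp] at h2
  have e : ([y].map (cj y⁻¹)) = [y] := by simp [cj_apply]
  rw [e] at h2
  have e2 : (y :: rest).map (cj y) = y :: rest.map (cj y) := by simp [cj_apply]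
  rw [e2]
  simpa using h2

theorem entry_mem_RD : ∀ (n : ℕ) (d₁ : List G) (x : G) (d₂ : List G), d₁.length = n →
    (d₁ ++ x :: d₂).prod = 1 → x ∈ RD (d₁ ++ x :: d₂) := by
  intro n
  induction n with
  | zero =>
    intro d₁ x d₂ hlen hp
    rw [List.length_eq_zero_iff] at hlen
    subst hlen
    exact be_head hp
  | succ n ih =>
    intro d₁ x d₂ hlen hp
    obtain ⟨a, d₁', rfl⟩ : ∃ a d₁', d₁ = a :: d₁' := by
      cases d₁ with
      | nil => simp at hlen
      | cons a t => exact ⟨a, t, rfl⟩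
    have hlen' : d₁'.length = n := by simpa using hlen
    have hde : BraidEquiv ((a :: d₁') ++ x :: d₂) ((d₁' ++ x :: d₂).map (cj a) ++ [a]) :=
      be_single a (d₁' ++ x :: d₂)
    have heshape : (d₁' ++ x :: d₂).map (cj a) ++ [a]
        = (d₁'.map (cj a)) ++ (cj a x) :: (d₂.map (cj a) ++ [a]) := by
      simp [List.append_assoc]
    have ht : (d₁' ++ x :: d₂).prod = a⁻¹ := by
      rw [List.cons_append, List.prod_cons] at hp
      rw [← one_mul (d₁' ++ x :: d₂).prod, ← inv_mul_cancel a, mul_assoc, hp, mul_one]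
    have hpe : ((d₁'.map (cj a)) ++ (cj a x) :: (d₂.map (cj a) ++ [a])).prod = 1 := by
      rw [← heshape, List.prod_append, prod_map_cj, ht]
      simp
    have hx' := ih (d₁'.map (cj a)) (cj a x) (d₂.map (cj a) ++ [a]) (by simpa using hlen') hpe
    rw [← heshape] at hx'
    have hxd : (cj a x) ∈ RD ((a :: d₁') ++ x :: d₂) := by
      have hx'' : BraidEquiv ((d₁' ++ x :: d₂).map (cj a) ++ [a])
          (((d₁' ++ x :: d₂).map (cj a) ++ [a]).map (cj (cj a x))) := hx'
      exact be_trans hde (be_trans hx'' (be_map_cj _ (be_symm hde)))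
    have had : a ∈ RD ((a :: d₁') ++ x :: d₂) := be_head hp
    have hxx : a⁻¹ * (cj a x) * a = x := by rw [cj_apply]; group
    have hmem := mul_mem (mul_mem (inv_mem had) hxd) had
    rw [hxx] at hmem
    exact hmem

theorem be_conj_self {d : List G} (hd : d.prod = 1) {τ : G}
    (hτ : τ ∈ Subgroup.closure {x | x ∈ d}) : BraidEquiv d (d.map (cj τ)) := by
  have hle : Subgroup.closure {x | x ∈ d} ≤ RD d := by
    rw [Subgroup.closure_le]
    intro x hx
    obtain ⟨d₁, d₂, rfl⟩ := List.append_of_mem hx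
    exact entry_mem_RD d₁.length d₁ x d₂ rfl hd
  exact hle hτ

theorem be_conj_after {c : List G} {τ : G} (hτ : τ ∈ Subgroup.closure {x | x ∈ c})
    (B m D : List G) (hm : m.prod = 1) :
    BraidEquiv (c ++ (B ++ (m ++ D))) (c ++ (B ++ (m.map (cj τ) ++ D))) := by
  have h1 : BraidEquiv (c ++ B) (B.map (cj c.prod) ++ c) := be_block c B
  have h2 : BraidEquiv (c ++ m) (c ++ m.map (cj τ)) := be_conj_suffix hτ m hm
  have s1 : BraidEquiv (c ++ (B ++ m)) (B.map (cj c.prod) ++ (c ++ m)) := by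
    simpa [List.append_assoc] using be_append_right m h1
  have s2 : BraidEquiv (B.map (cj c.prod) ++ (c ++ m))
      (B.map (cj c.prod) ++ (c ++ m.map (cj τ))) := be_append_left _ h2
  have s3 : BraidEquiv (B.map (cj c.prod) ++ (c ++ m.map (cj τ)))
      (c ++ (B ++ m.map (cj τ))) := by
    simpa [List.append_assoc] using be_append_right (m.map (cj τ)) (be_symm h1)
  have := be_append_right D (be_trans s1 (be_trans s2 s3))
  simpa [List.append_assoc] using this

theorem be_conj_before {c : List G} {τ : G} (hτ : τ ∈ Subgroup.closure {x | x ∈ c})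
    (B m D : List G) (hm : m.prod = 1) :
    BraidEquiv (m ++ (B ++ (c ++ D))) ((m.map (cj τ)) ++ (B ++ (c ++ D))) := by
  have hm' : (m.map (cj τ)).prod = 1 := by rw [prod_map_cj, hm]; group
  have h2 : BraidEquiv (c ++ m) (c ++ m.map (cj τ)) := be_conj_suffix hτ m hm
  have s1 : BraidEquiv (m ++ (B ++ c)) (B ++ (c ++ m)) := by
    simpa [List.append_assoc] using be_comm hm (B ++ c)
  have s2 : BraidEquiv (B ++ (c ++ m)) (B ++ (c ++ m.map (cj τ))) := be_append_left _ h2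
  have s3 : BraidEquiv (B ++ (c ++ m.map (cj τ))) (m.map (cj τ) ++ (B ++ c)) := by
    simpa [List.append_assoc] using be_symm (be_comm hm' (B ++ c))
  have := be_append_right D (be_trans s1 (be_trans s2 s3))
  simpa [List.append_assoc] using this

open Classical in
/-- Classical predicate: the block has product different from one. -/
noncomputable def bad : List G → Bool := fun b => decide (b.prod ≠ 1)

theorem perm_flatten {K K' : List (List G)} (h : K.Perm K')
    (hc : K.countP bad ≤ 1) : BraidEquiv K.flatten K'.flatten := by
  induction h with
  | nil => exact be_refl _
  | cons x h ih =>
    rename_i l₁ l₂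
    have h1 : l₁.countP bad ≤ 1 := le_trans (by rw [List.countP_cons]; omega) hc
    simpa [List.flatten_cons] using be_append_left x (ih h1)
  | swap x y l =>
    have hxy : x.prod = 1 ∨ y.prod = 1 := by
      by_contra hcon
      push_neg at hcon
      rw [List.countP_cons, List.countP_cons] at hc
      simp [bad, hcon.1, hcon.2] at hc
    have hswap : BraidEquiv (y ++ x) (x ++ y) := by
      rcases hxy with h | h
      · exact be_symm (be_comm h y)
      · exact be_comm h x
    simpa [List.flatten_cons, List.append_assoc] using be_append_right l.flatten hswap
  | trans h₁ h₂ ih₁ ih₂ =>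
    exact be_trans (ih₁ hc) (ih₂ (by rw [← List.Perm.countP_eq bad h₁]; exact hc))

theorem countP_le_one_nodup {α : Type*} {q : α → Bool} {a₀ : α}
    (hq : ∀ a, q a = true → a = a₀) : ∀ {l : List α}, l.Nodup → l.countP q ≤ 1 := by
  intro l hl
  induction l with
  | nil => simp
  | cons a l ih =>
    obtain ⟨ha, hl'⟩ := List.nodup_cons.mp hl
    rw [List.countP_cons]
    by_cases hqa : q a = true
    · have h0 : l.countP q = 0 := by
        apply List.countP_eq_zero.mpr
        intro b hb hqb
        exact ha ((hq b hqb).trans (hq a hqa).symm ▸ hb)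
      simp [hqa, h0]
    · have := ih hl'
      rw [if_neg hqa]
      omega

theorem perm_map_finRange {u : ℕ} (π : Equiv.Perm (Fin u)) :
    ((List.finRange u).map π).Perm (List.finRange u) := by
  classical
  apply List.perm_of_nodup_nodup_toFinset_eq
  · exact (List.nodup_finRange u).map π.injective
  · exact List.nodup_finRange u
  · ext k
    simp only [List.mem_toFinset, List.mem_map, List.mem_finRange, true_and, iff_true]
    exact ⟨π.symm k, π.apply_symm_apply k⟩

end BlocksAux

/-- **Blocks Lemma.** Let `g` be a concatenation of nonempty blocks `bs 0, …, bs (u-1)`,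
each with product 1 except possibly the block `i₀`. Then (a) `g` is braid equivalent to
the concatenation of the blocks in any permuted order, and (b) for any `i`, any `τ` in
the subgroup generated by the entries of block `i`, and any `j ≠ i₀`, `g` is braid
equivalent to the tuple obtained by conjugating every entry of block `j` by `τ`. -/
theorem blocks_lemma {G : Type*} [Group G] {u : ℕ} (bs : Fin u → List G)
    (hne : ∀ i, bs i ≠ []) (i₀ : Fin u)
    (hprod : ∀ i, i ≠ i₀ → (bs i).prod = 1) :
    (∀ π : Equiv.Perm (Fin u),
      BraidEquiv (List.ofFn bs).flatten (List.ofFn (fun i => bs (π i))).flatten) ∧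
    (∀ (i j : Fin u) (τ : G), τ ∈ Subgroup.closure {x | x ∈ bs i} → j ≠ i₀ →
      BraidEquiv (List.ofFn bs).flatten
        (List.ofFn (Function.update bs j ((bs j).map (fun x => τ * x * τ⁻¹)))).flatten) := by
  open BlocksAux in
  have hcount : (List.ofFn bs).countP bad ≤ 1 := by
    rw [List.ofFn_eq_map, List.countP_map]
    refine countP_le_one_nodup (a₀ := i₀) ?_ (List.nodup_finRange u)
    intro a ha
    by_contra hne'
    simp [Function.comp, bad, hprod a hne'] at ha
  constructor
  · intro π
    have hperm : (List.ofFn bs).Perm (List.ofFn fun i => bs (π i)) := by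
      rw [List.ofFn_eq_map, List.ofFn_eq_map]
      have he : List.map (fun i => bs (π i)) (List.finRange u)
          = List.map bs (List.map π (List.finRange u)) := by rw [List.map_map]; rfl
      rw [he]
      exact (List.Perm.map bs (perm_map_finRange π)).symm
    exact perm_flatten hperm hcount
  · intro i j τ hτ hj
    have hpj : (bs j).prod = 1 := hprod j hj
    obtain ⟨P, R, hPR⟩ := List.append_of_mem (List.mem_finRange j)
    have hnd : (P ++ j :: R).Nodup := hPR ▸ List.nodup_finRange u
    have hjP : j ∉ P := fun hmem =>
      (List.nodup_append'.mp hnd).2.2 hmem List.mem_cons_self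
    have hjR : j ∉ R := (List.nodup_cons.mp (List.nodup_append'.mp hnd).2.1).1
    set v := (bs j).map (fun x => τ * x * τ⁻¹) with hv
    have hvcj : v = (bs j).map (cj τ) := rfl
    have hmapP : P.map (Function.update bs j v) = P.map bs :=
      List.map_congr_left (fun k hk => Function.update_of_ne (by rintro rfl; exact hjP hk) _ _)
    have hmapR : R.map (Function.update bs j v) = R.map bs :=
      List.map_congr_left (fun k hk => Function.update_of_ne (by rintro rfl; exact hjR hk) _ _)
    have hupj : Function.update bs j v j = v := Function.update_self j v bs
    rw [List.ofFn_eq_map, List.ofFn_eq_map, hPR]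
    simp only [List.map_append, List.map_cons, hmapP, hmapR, hupj,
      List.flatten_append, List.flatten_cons]
    rcases eq_or_ne i j with rfl | hij
    · rw [hvcj]
      exact be_append_left _ (be_append_right _ (be_conj_self hpj hτ))
    · have hiPR : i ∈ P ++ j :: R := hPR ▸ List.mem_finRange i
      rcases List.mem_append.mp hiPR with hiP | hiR'
      · obtain ⟨P₁, P₂, rfl⟩ := List.append_of_mem hiP
        rw [hvcj]
        have := be_append_left ((P₁.map bs).flatten)
          (be_conj_after hτ ((P₂.map bs).flatten) (bs j) ((R.map bs).flatten) hpj)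
        simpa [List.map_append, List.flatten_append, List.append_assoc] using this
      · have hiR : i ∈ R := by
          rcases List.mem_cons.mp hiR' with h | h
          · exact absurd h hij
          · exact h
        obtain ⟨R₁, R₂, rfl⟩ := List.append_of_mem hiR
        rw [hvcj]
        have := be_append_left ((P.map bs).flatten)
          (be_conj_before hτ ((R₁.map bs).flatten) (bs j) ((R₂.map bs).flatten) hpj)
        simpa [List.map_append, List.flatten_append, List.append_assoc] using this
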